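/- For every ordinal α with 0 < α < ε₀ and every x ∈ ℕ, the Ackermann and fast-growing functions satisfy A_α(x) ≤ F_α(x) ≤ A_α(6x+5). -/

import Mathlib

open ONote Ordinal

/-- The relativized fast-growing hierarchy `F_{h,α}`, indexed by ordinal notations `< ε₀`:
`F_{h,0} = h`, `F_{h,α+1}(x) = F_{h,α}^[x+1](x)`, and `F_{h,λ}(x) = F_{h,λ(x)}(x)` for `λ` a
limit, using the standard assignment of fundamental sequences.  The (standard) fast-growing
hierarchy `F_α` of the paper is recovered as `FGH Nat.succ`. -/
def FGH (h : ℕ → ℕ) : ONote → ℕ → ℕ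
  | o =>
    match fundamentalSequence o, fundamentalSequence_has_prop o with
    | Sum.inl none, _ => h
    | Sum.inl (some a), hp =>
      have : a < o := by rw [lt_def, hp.1]; exact Order.lt_succ _
      fun i => (FGH h a)^[i + 1] i
    | Sum.inr f, hp => fun i =>
      have : f i < o := (hp.2.1 i).2.1
      FGH h (f i) i
  termination_by o => o

/-- The Ackermann hierarchy `A_α` (meaningful for `0 < α`): `A_1(x) = 2x`,
`A_{α+1}(x) = A_α^[x](1)`, `A_λ(x) = A_{λ(x)}(x)`. -/
def Ack : ONote → ℕ → ℕ
  | o =>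
    match fundamentalSequence o, fundamentalSequence_has_prop o with
    | Sum.inl none, _ => fun _ => 0
    | Sum.inl (some a), hp =>
      have : a < o := by rw [lt_def, hp.1]; exact Order.lt_succ _
      if a = 0 then fun x => 2 * x else fun x => (Ack a)^[x] 1
    | Sum.inr f, hp => fun i =>
      have : f i < o := (hp.2.1 i).2.1
      Ack (f i) i
  termination_by o => o


@[nolint unusedHavesSuffices]
theorem FGH_def (h : ℕ → ℕ) {o : ONote} {x} (e : fundamentalSequence o = x) :
    FGH h o =
      match
        (motive := (x : Option ONote ⊕ (ℕ → ONote)) → FundamentalSequenceProp o x → ℕ → ℕ)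
        x, e ▸ fundamentalSequence_has_prop o with
      | Sum.inl none, _ => h
      | Sum.inl (some a), _ => fun i => (FGH h a)^[i + 1] i
      | Sum.inr f, _ => fun i => FGH h (f i) i := by
  subst x
  rw [FGH]

theorem FGH_zero' (h : ℕ → ℕ) (o : ONote) (e : fundamentalSequence o = Sum.inl none) :
    FGH h o = h := by rw [FGH_def h e]

theorem FGH_succ (h : ℕ → ℕ) (o : ONote) {a} (e : fundamentalSequence o = Sum.inl (some a)) :
    FGH h o = fun i => (FGH h a)^[i + 1] i := by rw [FGH_def h e]

theorem FGH_limit (h : ℕ → ℕ) (o : ONote) {f} (e : fundamentalSequence o = Sum.inr f) :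
    FGH h o = fun i => FGH h (f i) i := by rw [FGH_def h e]

@[nolint unusedHavesSuffices]
theorem Ack_def {o : ONote} {x} (e : fundamentalSequence o = x) :
    Ack o =
      match
        (motive := (x : Option ONote ⊕ (ℕ → ONote)) → FundamentalSequenceProp o x → ℕ → ℕ)
        x, e ▸ fundamentalSequence_has_prop o with
      | Sum.inl none, _ => fun _ => 0
      | Sum.inl (some a), _ =>
        if a = 0 then fun x => 2 * x else fun x => (Ack a)^[x] 1
      | Sum.inr f, _ => fun i => Ack (f i) i := by
  subst x
  rw [Ack]

theorem Ack_zero' (o : ONote) (e : fundamentalSequence o = Sum.inl none) :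
    Ack o = fun _ => 0 := by rw [Ack_def e]

theorem Ack_succ_zero (o : ONote) (e : fundamentalSequence o = Sum.inl (some 0)) :
    Ack o = fun x => 2 * x := by rw [Ack_def e]; simp

theorem Ack_succ_pos (o : ONote) {a} (e : fundamentalSequence o = Sum.inl (some a))
    (ha : a ≠ 0) : Ack o = fun x => (Ack a)^[x] 1 := by
  rw [Ack_def e]; simp [ha]

/-- One "step down" with index `n`. -/
def SDStep (n : ℕ) (γ β : ONote) : Prop :=
  fundamentalSequence γ = Sum.inl (some β) ∨
    ∃ f, fundamentalSequence γ = Sum.inr f ∧ β = f n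

/-- Reachability by repeated steps down with index `n`. -/
def Reach (n : ℕ) : ONote → ONote → Prop :=
  Relation.ReflTransGen fun γ β => SDStep n γ β

theorem SDStep.lt {n γ β} (h : SDStep n γ β) : β < γ := by
  have hp := fundamentalSequence_has_prop γ
  rcases h with e | ⟨f, e, rfl⟩
  · rw [e] at hp
    rw [ONote.lt_def, hp.1]
    exact Order.lt_succ _
  · rw [e] at hp
    exact (hp.2.1 n).2.1

theorem Reach.le {n γ β} (h : Reach n γ β) : β ≤ γ := by
  induction h with
  | refl => exact le_rfl
  | tail _ h ih => exact (le_of_lt h.lt).trans ih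

theorem reach0 (n : ℕ) (γ : ONote) : Reach n γ 0 := by
  rcases e : fundamentalSequence γ with ⟨_ | a⟩ | f
  · have hp := fundamentalSequence_has_prop γ
    rw [e] at hp
    rw [hp]
    exact Relation.ReflTransGen.refl
  · have h1 : SDStep n γ a := Or.inl e
    have : a < γ := h1.lt
    exact (Relation.ReflTransGen.single h1).trans (reach0 n a)
  · have h1 : SDStep n γ (f n) := Or.inr ⟨f, e, rfl⟩
    have : f n < γ := h1.lt
    exact (Relation.ReflTransGen.single h1).trans (reach0 n (f n))
  termination_by γ

theorem sdstep_oadd_tail {n} (a : ONote) (m : ℕ+) {b b' : ONote} (h : SDStep n b b') :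
    SDStep n (oadd a m b) (oadd a m b') := by
  rcases h with e | ⟨f, e, rfl⟩
  · left
    rw [fundamentalSequence, e]
  · right
    exact ⟨_, by rw [fundamentalSequence, e], rfl⟩

theorem reach_oadd_tail {n} (a : ONote) (m : ℕ+) {b b' : ONote} (h : Reach n b b') :
    Reach n (oadd a m b) (oadd a m b') := by
  induction h with
  | refl => exact Relation.ReflTransGen.refl
  | tail _ h ih => exact ih.tail (sdstep_oadd_tail a m h)

theorem reach_oadd_tail0 {n} (a : ONote) (m : ℕ+) (b : ONote) :
    Reach n (oadd a m b) (oadd a m 0) :=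
  reach_oadd_tail a m (reach0 n b)


theorem Reach.single {n : ℕ} {γ β : ONote} (h : SDStep n γ β) : Reach n γ β :=
  Relation.ReflTransGen.single h

theorem fs_zero_onote : fundamentalSequence (0 : ONote) = Sum.inl none := rfl

theorem eq_zero_of_fs_none {a : ONote} (ea : fundamentalSequence a = Sum.inl none) : a = 0 := by
  have hp := fundamentalSequence_has_prop a
  rw [ea] at hp
  exact hp

theorem fs_oadd_succ (a : ONote) {a' : ONote} (j : ℕ)
    (ea : fundamentalSequence a = Sum.inl (some a')) :
    fundamentalSequence (oadd a (j + 1).succPNat 0) =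
      Sum.inr fun i => oadd a j.succPNat (oadd a' i.succPNat 0) := by
  rw [fundamentalSequence]
  simp only [fs_zero_onote, ea, Nat.natPred_succPNat]
  rfl

theorem fs_oadd_succ_one (a : ONote) {a' : ONote}
    (ea : fundamentalSequence a = Sum.inl (some a')) :
    fundamentalSequence (oadd a 1 0) = Sum.inr fun i => oadd a' i.succPNat 0 := by
  rw [fundamentalSequence]
  simp only [fs_zero_onote, ea]
  rfl

theorem fs_oadd_limit (a : ONote) {g : ℕ → ONote} (j : ℕ)
    (ea : fundamentalSequence a = Sum.inr g) :
    fundamentalSequence (oadd a (j + 1).succPNat 0) =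
      Sum.inr fun i => oadd a j.succPNat (oadd (g i) 1 0) := by
  rw [fundamentalSequence]
  simp only [fs_zero_onote, ea, Nat.natPred_succPNat]
  rfl

theorem fs_oadd_limit_one (a : ONote) {g : ℕ → ONote}
    (ea : fundamentalSequence a = Sum.inr g) :
    fundamentalSequence (oadd a 1 0) = Sum.inr fun i => oadd (g i) 1 0 := by
  rw [fundamentalSequence]
  simp only [fs_zero_onote, ea]
  rfl

theorem reach_coeff' (n : ℕ) (a : ONote) (j : ℕ) :
    Reach n (oadd a (j + 1).succPNat 0) (oadd a j.succPNat 0) := by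
  rcases ea : fundamentalSequence a with ⟨_ | a'⟩ | g
  · obtain rfl : a = 0 := eq_zero_of_fs_none ea
    refine Reach.single (Or.inl ?_)
    rw [fundamentalSequence]
    simp only [fs_zero_onote, Nat.natPred_succPNat]
    rfl
  · exact (Reach.single (Or.inr ⟨_, fs_oadd_succ a j ea, rfl⟩)).trans (reach_oadd_tail0 _ _ _)
  · exact (Reach.single (Or.inr ⟨_, fs_oadd_limit a j ea, rfl⟩)).trans (reach_oadd_tail0 _ _ _)

theorem reach_coeff_le (n : ℕ) (a : ONote) (d j : ℕ) :
    Reach n (oadd a (j + d).succPNat 0) (oadd a j.succPNat 0) := by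
  induction d with
  | zero => exact Relation.ReflTransGen.refl
  | succ d ih => exact (reach_coeff' n a (j + d)).trans ih

theorem sdstep_exp (n : ℕ) {β β' : ONote} (h : SDStep n β β') :
    Reach n (oadd β 1 0) (oadd β' 1 0) := by
  rcases h with e | ⟨g, e, rfl⟩
  · refine (Reach.single (Or.inr ⟨_, fs_oadd_succ_one β e, rfl⟩)).trans ?_
    have h2 := reach_coeff_le n β' n 0
    rwa [Nat.zero_add] at h2
  · exact Reach.single (Or.inr ⟨_, fs_oadd_limit_one β e, rfl⟩)

theorem reach_exp {n : ℕ} {β β' : ONote} (h : Reach n β β') :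
    Reach n (oadd β 1 0) (oadd β' 1 0) := by
  induction h with
  | refl => exact Relation.ReflTransGen.refl
  | tail _ h ih => exact ih.trans (sdstep_exp _ h)

theorem fs_reach {m n : ℕ} (hmn : m ≤ n) (γ : ONote) :
    ∀ {f}, fundamentalSequence γ = Sum.inr f → Reach n (f n) (f m) := by
  induction γ with
  | zero => intro f e; rw [fundamentalSequence] at e; exact absurd e (by simp)
  | oadd a c b iha ihb =>
    intro f e
    rcases eb : fundamentalSequence b with ⟨_ | b'⟩ | g
    · obtain rfl : b = 0 := eq_zero_of_fs_none eb
      obtain ⟨cp, rfl⟩ : ∃ cp, c = cp.succPNat := ⟨c.natPred, (PNat.succPNat_natPred c).symm⟩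
      rcases cp with _ | c'
      · rcases ea : fundamentalSequence a with ⟨_ | a'⟩ | g
        · obtain rfl : a = 0 := eq_zero_of_fs_none ea
          have e2 : Sum.inl (some ONote.zero) = Sum.inr f := Eq.trans (by rfl) e
          exact absurd e2 (by simp)
        · have e2 : fundamentalSequence (oadd a 1 0) = Sum.inr f := e
          rw [fs_oadd_succ_one a ea] at e2
          injection e2 with e'; subst e'
          have h2 := reach_coeff_le n a' (n - m) m
          rwa [Nat.add_sub_cancel' hmn] at h2
        · have e2 : fundamentalSequence (oadd a 1 0) = Sum.inr f := e
          rw [fs_oadd_limit_one a ea] at e2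
          injection e2 with e'; subst e'
          exact reach_exp (iha ea)
      · rcases ea : fundamentalSequence a with ⟨_ | a'⟩ | g
        · obtain rfl : a = 0 := eq_zero_of_fs_none ea
          have e2 : Sum.inl (some (oadd ONote.zero c'.succPNat ONote.zero)) = Sum.inr f :=
            Eq.trans (by rfl) e
          exact absurd e2 (by simp)
        · rw [fs_oadd_succ a c' ea] at e
          injection e with e'; subst e'
          refine reach_oadd_tail _ _ ?_
          have h2 := reach_coeff_le n a' (n - m) m
          rwa [Nat.add_sub_cancel' hmn] at h2
        · rw [fs_oadd_limit a c' ea] at e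
          injection e with e'; subst e'
          exact reach_oadd_tail _ _ (reach_exp (iha ea))
    · rw [fundamentalSequence] at e
      rw [eb] at e
      exact absurd e (by simp)
    · rw [fundamentalSequence] at e
      rw [eb] at e
      injection e with e'; subst e'
      exact reach_oadd_tail _ _ (ihb eb)

theorem le_iterate_of_le {F : ℕ → ℕ} (hF : ∀ y, y ≤ F y) (k y : ℕ) : y ≤ F^[k] y := by
  induction k with
  | zero => exact le_rfl
  | succ k ih => rw [Function.iterate_succ_apply']; exact ih.trans (hF _)

theorem lt_FGH (α : ONote) (x : ℕ) : x < FGH Nat.succ α x := by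
  rcases e : fundamentalSequence α with ⟨_ | a⟩ | f
  · rw [FGH_zero' _ _ e]; exact Nat.lt_succ_self x
  · have ha : a < α := SDStep.lt (n := 0) (Or.inl e)
    rw [FGH_succ _ _ e]
    have h1 : ∀ y, y ≤ FGH Nat.succ a y := fun y => (lt_FGH a y).le
    calc x < FGH Nat.succ a x := lt_FGH a x
    _ ≤ (FGH Nat.succ a)^[x + 1] x := by
        rw [Function.iterate_succ_apply]
        exact le_iterate_of_le h1 x _
  · have ha : f x < α := SDStep.lt (n := x) (Or.inr ⟨f, e, rfl⟩)
    rw [FGH_limit _ _ e]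
    exact lt_FGH (f x) x
  termination_by α

theorem FGH_expansive (α : ONote) (x : ℕ) : x ≤ FGH Nat.succ α x := (lt_FGH α x).le

theorem sdstep_FGH {n : ℕ} {γ β : ONote} (h : SDStep n γ β) :
    FGH Nat.succ β n ≤ FGH Nat.succ γ n := by
  rcases h with e | ⟨f, e, rfl⟩
  · rw [FGH_succ _ _ e]
    show FGH Nat.succ β n ≤ (FGH Nat.succ β)^[n + 1] n
    rw [Function.iterate_succ_apply]
    exact le_iterate_of_le (FGH_expansive β) n _
  · rw [FGH_limit _ _ e]

theorem reach_FGH {n : ℕ} {γ β : ONote} (h : Reach n γ β) :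
    FGH Nat.succ β n ≤ FGH Nat.succ γ n := by
  induction h with
  | refl => exact le_rfl
  | tail _ h ih => exact (sdstep_FGH h).trans ih

theorem FGH_mono (α : ONote) : Monotone (FGH Nat.succ α) := by
  refine monotone_nat_of_le_succ fun x => ?_
  rcases e : fundamentalSequence α with ⟨_ | a⟩ | f
  · rw [FGH_zero' _ _ e]; exact Nat.le_succ _
  · have ha : a < α := SDStep.lt (n := 0) (Or.inl e)
    rw [FGH_succ _ _ e]
    have hm : Monotone (FGH Nat.succ a) := FGH_mono a
    calc (FGH Nat.succ a)^[x + 1] x ≤ (FGH Nat.succ a)^[x + 1] (x + 1) :=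
          hm.iterate (x + 1) (Nat.le_succ x)
    _ ≤ (FGH Nat.succ a)^[x + 2] (x + 1) := by
          rw [Function.iterate_succ_apply]
          exact hm.iterate (x + 1) (FGH_expansive a (x + 1))
  · have ha : f x < α := SDStep.lt (n := x) (Or.inr ⟨f, e, rfl⟩)
    rw [FGH_limit _ _ e]
    calc FGH Nat.succ (f x) x ≤ FGH Nat.succ (f x) (x + 1) := (FGH_mono (f x)) (Nat.le_succ x)
    _ ≤ FGH Nat.succ (f (x + 1)) (x + 1) := reach_FGH (fs_reach (Nat.le_succ x) α e)
  termination_by α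

theorem Ack_limit (o : ONote) {f} (e : fundamentalSequence o = Sum.inr f) :
    Ack o = fun i => Ack (f i) i := by rw [Ack_def e]

theorem Ack_zero_apply (x : ℕ) : Ack 0 x = 0 := by rw [Ack_zero' 0 rfl]

theorem Ack_apply_zero_le (α : ONote) : Ack α 0 ≤ 1 := by
  rcases e : fundamentalSequence α with ⟨_ | a⟩ | f
  · rw [Ack_zero' _ e]; exact Nat.zero_le 1
  · rcases eq_or_ne a 0 with rfl | ha
    · rw [Ack_succ_zero _ e]
      norm_num
    · rw [Ack_succ_pos _ e ha]
      exact le_rfl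
  · have ha : f 0 < α := SDStep.lt (n := 0) (Or.inr ⟨f, e, rfl⟩)
    rw [Ack_limit α e]
    exact Ack_apply_zero_le (f 0)
  termination_by α

theorem fs_ne_zero {γ : ONote} {f : ℕ → ONote} (e : fundamentalSequence γ = Sum.inr f)
    {x : ℕ} (hx : 0 < x) : f x ≠ 0 := by
  have hp := fundamentalSequence_has_prop γ
  rw [e] at hp
  have hsm : StrictMono f := strictMono_nat_of_lt_succ fun i => (hp.2.1 i).1
  have h0 : (0 : ONote) ≤ f 0 := by
    rw [ONote.le_def]; exact zero_le
  have : (0 : ONote) < f x := lt_of_le_of_lt h0 (hsm hx)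
  intro hc
  rw [hc] at this
  exact lt_irrefl _ this

theorem Ack_ge {α : ONote} (hα : α ≠ 0) (x : ℕ) : 2 * x ≤ Ack α x := by
  rcases e : fundamentalSequence α with ⟨_ | a⟩ | f
  · exact absurd (eq_zero_of_fs_none e) hα
  · rcases eq_or_ne a 0 with rfl | ha
    · rw [Ack_succ_zero _ e]
    · have hlt : a < α := SDStep.lt (n := 0) (Or.inl e)
      rw [Ack_succ_pos _ e ha]
      show 2 * x ≤ (Ack a)^[x] 1
      have key : ∀ k, k + 1 ≤ (Ack a)^[k] 1 := by
        intro k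
        induction k with
        | zero => exact le_rfl
        | succ k ih =>
          rw [Function.iterate_succ_apply']
          calc k + 2 ≤ 2 * (k + 1) := by omega
          _ ≤ 2 * (Ack a)^[k] 1 := by omega
          _ ≤ Ack a ((Ack a)^[k] 1) := Ack_ge ha _
      rcases x with _ | s
      · omega
      · rw [Function.iterate_succ_apply']
        calc 2 * (s + 1) ≤ 2 * (Ack a)^[s] 1 := by have := key s; omega
        _ ≤ Ack a ((Ack a)^[s] 1) := Ack_ge ha _
  · rcases Nat.eq_zero_or_pos x with rfl | hx
    · simp
    · have hfx : f x ≠ 0 := fs_ne_zero e hx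
      have hlt : f x < α := SDStep.lt (n := x) (Or.inr ⟨f, e, rfl⟩)
      rw [Ack_limit α e]
      exact Ack_ge hfx x
  termination_by α

theorem Ack_expansive {α : ONote} (hα : α ≠ 0) (x : ℕ) : x ≤ Ack α x :=
  le_trans (by omega) (Ack_ge hα x)

theorem Ack_iter_ge {a : ONote} (ha : a ≠ 0) (k : ℕ) : k + 1 ≤ (Ack a)^[k] 1 := by
  induction k with
  | zero => exact le_rfl
  | succ k ih =>
    rw [Function.iterate_succ_apply']
    calc k + 2 ≤ 2 * (k + 1) := by omega
    _ ≤ 2 * (Ack a)^[k] 1 := by omega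
    _ ≤ Ack a ((Ack a)^[k] 1) := Ack_ge ha _

theorem Ack_iter_pow {a : ONote} (ha : a ≠ 0) (k : ℕ) : 2 ^ k ≤ (Ack a)^[k] 1 := by
  induction k with
  | zero => exact le_rfl
  | succ k ih =>
    rw [Function.iterate_succ_apply', pow_succ]
    calc 2 ^ k * 2 = 2 * 2 ^ k := by ring
    _ ≤ 2 * (Ack a)^[k] 1 := by omega
    _ ≤ Ack a ((Ack a)^[k] 1) := Ack_ge ha _

theorem Ack_iter_mono {a : ONote} (ha : a ≠ 0) {j k : ℕ} (h : j ≤ k) :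
    (Ack a)^[j] 1 ≤ (Ack a)^[k] 1 := by
  obtain ⟨d, rfl⟩ := Nat.exists_eq_add_of_le h
  rw [Nat.add_comm, Function.iterate_add_apply]
  exact le_iterate_of_le (Ack_expansive ha) d _

theorem sdstep_Ack {n : ℕ} {γ β : ONote} (h : SDStep n γ β)
    (hm : ∀ δ : ONote, δ < γ → Monotone (Ack δ)) : Ack β n ≤ Ack γ n := by
  rcases h with e | ⟨f, e, rfl⟩
  · rcases eq_or_ne β 0 with rfl | hb
    · rw [Ack_zero_apply]; exact Nat.zero_le _
    · rw [Ack_succ_pos _ e hb]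
      show Ack β n ≤ (Ack β)^[n] 1
      rcases n with _ | s
      · exact Ack_apply_zero_le β
      · rw [Function.iterate_succ_apply']
        have hlt : β < γ := SDStep.lt (n := 0) (Or.inl e)
        exact hm β hlt (Ack_iter_ge hb s)
  · exact le_of_eq (by rw [Ack_limit γ e])

theorem reach_Ack {n : ℕ} {γ β : ONote} (h : Reach n γ β) :
    (∀ δ : ONote, δ < γ → Monotone (Ack δ)) → Ack β n ≤ Ack γ n := by
  induction h using Relation.ReflTransGen.head_induction_on with
  | refl => exact fun _ => le_rfl
  | @head a c step rest ih =>
    intro hm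
    have hc : c < a := step.lt
    exact (ih fun δ hδ => hm δ (hδ.trans hc)).trans (sdstep_Ack step hm)

theorem Ack_mono (α : ONote) : Monotone (Ack α) := by
  refine monotone_nat_of_le_succ fun x => ?_
  rcases e : fundamentalSequence α with ⟨_ | a⟩ | f
  · rw [Ack_zero' _ e]
  · rcases eq_or_ne a 0 with rfl | ha
    · rw [Ack_succ_zero _ e]
      show 2 * x ≤ 2 * (x + 1)
      omega
    · rw [Ack_succ_pos _ e ha]
      show (Ack a)^[x] 1 ≤ (Ack a)^[x + 1] 1
      exact Ack_iter_mono ha (Nat.le_succ x)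
  · have hfx : f x < α := SDStep.lt (n := x) (Or.inr ⟨f, e, rfl⟩)
    have hfx1 : f (x + 1) < α := SDStep.lt (n := x + 1) (Or.inr ⟨f, e, rfl⟩)
    rw [Ack_limit α e]
    calc Ack (f x) x ≤ Ack (f x) (x + 1) := Ack_mono (f x) (Nat.le_succ x)
    _ ≤ Ack (f (x + 1)) (x + 1) := by
        refine reach_Ack (fs_reach (Nat.le_succ x) α e) fun δ hδ => ?_
        have hδα : δ < α := hδ.trans hfx1
        exact Ack_mono δ
  termination_by α

theorem succ_iterate (k y : ℕ) : Nat.succ^[k] y = y + k := by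
  induction k with
  | zero => rfl
  | succ k ih => rw [Function.iterate_succ_apply', ih]; omega

theorem main_ineq (α : ONote) (hα : α ≠ 0) (x : ℕ) :
    Ack α x ≤ FGH Nat.succ α x ∧ FGH Nat.succ α x ≤ Ack α (6 * x + 5) := by
  rcases e : fundamentalSequence α with ⟨_ | a⟩ | f
  · exact absurd (eq_zero_of_fs_none e) hα
  · rcases eq_or_ne a 0 with rfl | ha
    · rw [Ack_succ_zero _ e, FGH_succ _ _ e]
      show 2 * x ≤ (FGH Nat.succ 0)^[x + 1] x ∧ (FGH Nat.succ 0)^[x + 1] x ≤ 2 * (6 * x + 5)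
      rw [FGH_zero' _ 0 rfl, succ_iterate]
      omega
    · have hlt : a < α := SDStep.lt (n := 0) (Or.inl e)
      have IH : ∀ y, Ack a y ≤ FGH Nat.succ a y ∧ FGH Nat.succ a y ≤ Ack a (6 * y + 5) :=
        fun y => main_ineq a ha y
      rw [Ack_succ_pos _ e ha, FGH_succ _ _ e]
      show (Ack a)^[x] 1 ≤ (FGH Nat.succ a)^[x + 1] x ∧
        (FGH Nat.succ a)^[x + 1] x ≤ (Ack a)^[6 * x + 5] 1
      constructor
      · have claim : ∀ j, (Ack a)^[j] 1 ≤ (FGH Nat.succ a)^[j + 1] x := by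
          intro j
          induction j with
          | zero =>
            show (Ack a)^[0] 1 ≤ (FGH Nat.succ a)^[1] x
            simp only [Function.iterate_zero, Function.iterate_one, id_eq]
            have := lt_FGH a x
            omega
          | succ j ih =>
            rw [Function.iterate_succ_apply' (Ack a),
              Function.iterate_succ_apply' (FGH Nat.succ a)]
            exact (IH _).1.trans (FGH_mono a ih)
        exact claim x
      · have claim : ∀ j, (FGH Nat.succ a)^[j + 1] x ≤ (Ack a)^[4 * j + 4 + x] 1 := by
          intro j
          induction j with
          | zero =>
            show FGH Nat.succ a x ≤ (Ack a)^[4 + x] 1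
            have h1 : 6 * x + 5 ≤ (Ack a)^[x + 3] 1 := by
              have h2 := Ack_iter_pow ha (x + 3)
              have h3 : x < 2 ^ x := Nat.lt_two_pow_self
              have h4 : 2 ^ (x + 3) = 8 * 2 ^ x := by ring
              omega
            calc FGH Nat.succ a x ≤ Ack a (6 * x + 5) := (IH x).2
            _ ≤ Ack a ((Ack a)^[x + 3] 1) := Ack_mono a h1
            _ = (Ack a)^[4 + x] 1 := by
                rw [← Function.iterate_succ_apply' (Ack a) (x + 3) 1]
                congr 1
                omega
          | succ j ih =>
            set t := (FGH Nat.succ a)^[j + 1] x with ht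
            set s := (Ack a)^[4 * j + 4 + x] 1 with hs
            have hs16 : 16 ≤ s := by
              have h2 := Ack_iter_pow ha (4 * j + 4 + x)
              have h3 : 2 ^ 4 ≤ 2 ^ (4 * j + 4 + x) :=
                Nat.pow_le_pow_right (by norm_num) (by omega)
              norm_num at h3
              omega
            have h8s : 6 * s + 5 ≤ (Ack a)^[3] s := by
              have g1 : 2 * s ≤ Ack a s := Ack_ge ha s
              have g2 : 2 * Ack a s ≤ Ack a (Ack a s) := Ack_ge ha _
              have g3 : 2 * Ack a (Ack a s) ≤ Ack a (Ack a (Ack a s)) := Ack_ge ha _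
              show 6 * s + 5 ≤ Ack a (Ack a (Ack a s))
              omega
            have step1 : (FGH Nat.succ a)^[j + 2] x ≤ Ack a (6 * t + 5) := by
              rw [Function.iterate_succ_apply' (FGH Nat.succ a)]
              exact (IH t).2
            have step2 : Ack a (6 * t + 5) ≤ Ack a ((Ack a)^[3] s) := by
              refine Ack_mono a ?_
              have : t ≤ s := ih
              omega
            have step3 : Ack a ((Ack a)^[3] s) = (Ack a)^[4 * (j + 1) + 4 + x] 1 := by
              rw [← Function.iterate_succ_apply' (Ack a), hs,
                ← Function.iterate_add_apply]
              congr 1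
              omega
            exact (step1.trans step2).trans_eq step3
        calc (FGH Nat.succ a)^[x + 1] x ≤ (Ack a)^[4 * x + 4 + x] 1 := claim x
        _ ≤ (Ack a)^[6 * x + 5] 1 := Ack_iter_mono ha (by omega)
  · have hfx : f x < α := SDStep.lt (n := x) (Or.inr ⟨f, e, rfl⟩)
    have hf65 : f (6 * x + 5) < α := SDStep.lt (n := 6 * x + 5) (Or.inr ⟨f, e, rfl⟩)
    have h65 : f (6 * x + 5) ≠ 0 := fs_ne_zero e (by omega)
    rw [Ack_limit α e, FGH_limit _ _ e]
    show Ack (f x) x ≤ FGH Nat.succ (f x) x ∧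
      FGH Nat.succ (f x) x ≤ Ack (f (6 * x + 5)) (6 * x + 5)
    constructor
    · rcases eq_or_ne (f x) 0 with hf | hf
      · rw [hf, Ack_zero_apply]
        exact Nat.zero_le _
      · exact (main_ineq (f x) hf x).1
    · rcases eq_or_ne (f x) 0 with hf | hf
      · rw [hf, FGH_zero' _ 0 rfl]
        have := Ack_ge h65 (6 * x + 5)
        omega
      · calc FGH Nat.succ (f x) x ≤ Ack (f x) (6 * x + 5) := (main_ineq (f x) hf x).2
        _ ≤ Ack (f (6 * x + 5)) (6 * x + 5) :=
            reach_Ack (fs_reach (by omega) α e) fun δ _ => Ack_mono δ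
  termination_by α

/-- For every ordinal `0 < α < ε₀` and every `x ∈ ℕ`, the Ackermann and fast-growing
functions satisfy `A_α(x) ≤ F_α(x) ≤ A_α(6x+5)`. -/
theorem ack_le_fastGrowing_le_ack (α : ONote) (hNF : α.NF) (hα : 0 < α) (x : ℕ) :
    Ack α x ≤ FGH Nat.succ α x ∧ FGH Nat.succ α x ≤ Ack α (6 * x + 5) :=
  main_ineq α hα.ne' x
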